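/- Let (X,d) be a complete, simply-connected metric space equipped with a convex local geodesic bicombing σ, and let d̄ denote the induced length metric on X. If σ̃ and σ̃′ are two convex geodesic bicombings on (X,d̄) that are both consistent with σ (i.e. each σ̃_{xy} and each σ̃′_{xy}, viewed as a map into (X,d), is a local geodesic consistent with σ), then σ̃ = σ̃′. -/

import Mathlib

open Set Metric

/-- `c : [0,1] → X` is a geodesic: `d(c s, c t) = |s - t| ⬝ d(c 0, c 1)` for `s, t ∈ [0,1]`. -/
def IsGeodesicSegment {X : Type*} [MetricSpace X] (c : ℝ → X) : Prop :=
  ∀ s ∈ Icc (0:ℝ) 1, ∀ t ∈ Icc (0:ℝ) 1,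
    dist (c s) (c t) = |s - t| * dist (c 0) (c 1)

/-- A local geodesic bicombing on a metric space `X`: an assignment `x ↦ r x > 0` and a
selection `σ y z` of geodesics from `y` to `z` for pairs `y, z` lying in a common ball
`U(x, r x)`, staying in that ball, and consistent with taking subsegments. -/
structure LocalGeodesicBicombing (X : Type*) [MetricSpace X] where
  r : X → ℝ
  r_pos : ∀ x, 0 < r x
  σ : X → X → ℝ → X
  source : ∀ x y z, y ∈ ball x (r x) → z ∈ ball x (r x) → σ y z 0 = y
  target : ∀ x y z, y ∈ ball x (r x) → z ∈ ball x (r x) → σ y z 1 = z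
  geodesic : ∀ x y z, y ∈ ball x (r x) → z ∈ ball x (r x) →
    ∀ s ∈ Icc (0:ℝ) 1, ∀ t ∈ Icc (0:ℝ) 1, dist (σ y z s) (σ y z t) = |s - t| * dist y z
  mem_ball : ∀ x y z, y ∈ ball x (r x) → z ∈ ball x (r x) →
    ∀ t ∈ Icc (0:ℝ) 1, σ y z t ∈ ball x (r x)
  consistent : ∀ x y z, y ∈ ball x (r x) → z ∈ ball x (r x) →
    ∀ a b, 0 ≤ a → a ≤ b → b ≤ 1 → ∀ t ∈ Icc (0:ℝ) 1,
      σ (σ y z a) (σ y z b) t = σ y z ((1 - t) * a + t * b)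

namespace LocalGeodesicBicombing

variable {X : Type*} [MetricSpace X]

/-- The domain `U` of the local bicombing: pairs of points lying in a common ball `U(x, r x)`. -/
def InDom (L : LocalGeodesicBicombing X) (y z : X) : Prop :=
  ∃ x, y ∈ ball x (L.r x) ∧ z ∈ ball x (L.r x)

/-- A local geodesic bicombing is convex if it is locally convex. -/
def IsConvex (L : LocalGeodesicBicombing X) : Prop :=
  ∀ x, ∀ y ∈ ball x (L.r x), ∀ z ∈ ball x (L.r x), ∀ y' ∈ ball x (L.r x), ∀ z' ∈ ball x (L.r x),
    ConvexOn ℝ (Icc (0:ℝ) 1) (fun t => dist (L.σ y z t) (L.σ y' z' t))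

/-- A local geodesic bicombing is reversible if `σ z y (t) = σ y z (1 - t)` on its domain. -/
def IsReversible (L : LocalGeodesicBicombing X) : Prop :=
  ∀ y z, L.InDom y z → ∀ t ∈ Icc (0:ℝ) 1, L.σ z y t = L.σ y z (1 - t)

end LocalGeodesicBicombing

/-- The length `L(γ)` of a curve `γ : [0,1] → X` (as a real number; the supremum over
partitions of `[0,1]` of the sums of consecutive distances). -/
noncomputable def curveLength {X : Type*} [MetricSpace X] (γ : ℝ → X) : ℝ :=
  (eVariationOn γ (Icc (0:ℝ) 1)).toReal

/-- `c : [0,1] → X` is a local geodesic: every `t ∈ [0,1]` has a neighborhood in `[0,1]` on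
which `d(c s, c s') = |s - s'| ⬝ L(c)`. -/
def IsLocalGeodesic {X : Type*} [MetricSpace X] (c : ℝ → X) : Prop :=
  ∀ t ∈ Icc (0:ℝ) 1, ∃ ε > (0:ℝ),
    ∀ s ∈ Icc (0:ℝ) 1 ∩ Ioo (t - ε) (t + ε), ∀ s' ∈ Icc (0:ℝ) 1 ∩ Ioo (t - ε) (t + ε),
      dist (c s) (c s') = |s - s'| * curveLength c

/-- A curve `c : [0,1] → X` is consistent with the local geodesic bicombing `L` if
`c ((1-t)a + tb) = σ (c a) (c b) t` whenever `0 ≤ a ≤ b ≤ 1` and `(c a, c b)` is in the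
domain of `L`. -/
def LocalGeodesicBicombing.ConsistentWith {X : Type*} [MetricSpace X]
    (L : LocalGeodesicBicombing X) (c : ℝ → X) : Prop :=
  ∀ a b, 0 ≤ a → a ≤ b → b ≤ 1 → L.InDom (c a) (c b) →
    ∀ t ∈ Icc (0:ℝ) 1, c ((1 - t) * a + t * b) = L.σ (c a) (c b) t

/-- The induced length metric `d̄(x,y)`: the infimum of lengths of continuous curves from
`x` to `y`. -/
noncomputable def lengthMetric {X : Type*} [MetricSpace X] (x y : X) : ℝ :=
  (⨅ (γ : ℝ → X) (_ : ContinuousOn γ (Icc (0:ℝ) 1)) (_ : γ 0 = x) (_ : γ 1 = y),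
    eVariationOn γ (Icc (0:ℝ) 1)).toReal

/-- `σ'` is a convex geodesic bicombing on `(X, d̄)` (where `d̄` is the induced length metric)
which is consistent with the local geodesic bicombing `L` on `(X, d)`: each `σ' x y` is a
geodesic from `x` to `y` with respect to `d̄`, the selection is consistent with taking
subsegments, the function `t ↦ d̄(σ' x y t, σ' x' y' t)` is convex on `[0,1]`, and each
`σ' x y`, viewed as a map into `(X, d)`, is a local geodesic consistent with `L`. -/
structure IsConsistentConvexBicombing {X : Type*} [MetricSpace X]
    (L : LocalGeodesicBicombing X) (σ' : X → X → ℝ → X) : Prop where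
  source : ∀ x y, σ' x y 0 = x
  target : ∀ x y, σ' x y 1 = y
  geodesic : ∀ x y, ∀ s ∈ Icc (0:ℝ) 1, ∀ t ∈ Icc (0:ℝ) 1,
    lengthMetric (σ' x y s) (σ' x y t) = |s - t| * lengthMetric x y
  consistent : ∀ x y a b, 0 ≤ a → a ≤ b → b ≤ 1 → ∀ t ∈ Icc (0:ℝ) 1,
    σ' (σ' x y a) (σ' x y b) t = σ' x y ((1 - t) * a + t * b)
  convex : ∀ x y x' y', ConvexOn ℝ (Icc (0:ℝ) 1)
    (fun t => lengthMetric (σ' x y t) (σ' x' y' t))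
  localGeodesic : ∀ x y, IsLocalGeodesic (σ' x y)
  consistentWith : ∀ x y, L.ConsistentWith (σ' x y)

section CHHelpers

theorem ContinuousOn.dist' {α X : Type*} [TopologicalSpace α] [MetricSpace X]
    {f g : α → X} {s : Set α} (hf : ContinuousOn f s) (hg : ContinuousOn g s) :
    ContinuousOn (fun x => dist (f x) (g x)) s :=
  continuous_dist.comp_continuousOn (hf.prodMk hg)

variable {X : Type*} [MetricSpace X]

theorem localGeodesic_continuousOn {c : ℝ → X} (h : IsLocalGeodesic c) :
    ContinuousOn c (Icc 0 1) := by
  intro t ht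
  obtain ⟨ε, hε, hloc⟩ := h t ht
  rw [Metric.continuousWithinAt_iff]
  intro ε' hε'
  have hLc : 0 ≤ curveLength c := ENNReal.toReal_nonneg
  refine ⟨min ε (ε' / (curveLength c + 1)), lt_min hε (by positivity), fun s hs hd => ?_⟩
  have hst : |s - t| < ε := by
    have := lt_of_lt_of_le hd (min_le_left _ _); rwa [Real.dist_eq] at this
  have hst' : |s - t| < ε' / (curveLength c + 1) := by
    have := lt_of_lt_of_le hd (min_le_right _ _); rwa [Real.dist_eq] at this
  obtain ⟨ha1, ha2⟩ := abs_lt.1 hst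
  have h1 : s ∈ Icc (0:ℝ) 1 ∩ Ioo (t - ε) (t + ε) :=
    ⟨hs, by constructor <;> linarith⟩
  have h2 : t ∈ Icc (0:ℝ) 1 ∩ Ioo (t - ε) (t + ε) :=
    ⟨ht, by constructor <;> linarith⟩
  calc dist (c s) (c t) = |s - t| * curveLength c := hloc s h1 t h2
    _ ≤ |s - t| * (curveLength c + 1) :=
        mul_le_mul_of_nonneg_left (by linarith) (abs_nonneg _)
    _ < ε' := by
        have := (lt_div_iff₀ (by positivity : (0:ℝ) < curveLength c + 1)).1 hst'
        linarith

theorem localGeodesic_dist_le {c : ℝ → X} (h : IsLocalGeodesic c)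
    {s u : ℝ} (hs : s ∈ Icc (0:ℝ) 1) (hu : u ∈ Icc (0:ℝ) 1) (hsu : s ≤ u) :
    dist (c s) (c u) ≤ curveLength c * (u - s) := by
  have hL0 : 0 ≤ curveLength c := ENNReal.toReal_nonneg
  set S : Set ℝ := {v | dist (c s) (c v) ≤ curveLength c * (v - s)} with hS
  have hsub : Icc s 1 ⊆ S := by
    apply IsClosed.Icc_subset_of_forall_exists_gt
    · have hcont : ContinuousOn (fun v => dist (c s) (c v) - curveLength c * (v - s))
          (Icc s 1) := by
        apply ContinuousOn.sub
        · exact continuous_dist.comp_continuousOn (continuousOn_const.prodMk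
            ((localGeodesic_continuousOn h).mono (Icc_subset_Icc hs.1 le_rfl)))
        · fun_prop
      have hcl := hcont.preimage_isClosed_of_isClosed isClosed_Icc
        (isClosed_Iic (a := (0:ℝ)))
      convert hcl using 1
      ext v
      simp only [hS, mem_inter_iff, mem_setOf_eq, mem_preimage, mem_Iic, sub_nonpos]
      tauto
    · simp [hS]
    · rintro v ⟨hvS, hvI⟩ Y hY
      have hv0 : (0:ℝ) ≤ v := le_trans hs.1 hvI.1
      obtain ⟨ε, hε, hloc⟩ := h v ⟨hv0, hvI.2.le⟩
      set w := min (min (v + ε/2) Y) 1 with hw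
      have hwv : v < w := lt_min (lt_min (by linarith) hY) hvI.2
      have hw1 : w ≤ 1 := min_le_right _ _
      have hwε : w - v < ε := by
        have : w ≤ v + ε/2 := le_trans (min_le_left _ _) (min_le_left _ _)
        linarith
      have hvmem : v ∈ Icc (0:ℝ) 1 ∩ Ioo (v - ε) (v + ε) :=
        ⟨⟨hv0, hvI.2.le⟩, by constructor <;> linarith⟩
      have hwmem : w ∈ Icc (0:ℝ) 1 ∩ Ioo (v - ε) (v + ε) :=
        ⟨⟨by linarith, hw1⟩, by constructor <;> linarith⟩
      refine ⟨w, ?_, hwv, le_trans (min_le_left _ _) (min_le_right _ _)⟩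
      have hd : dist (c v) (c w) = |v - w| * curveLength c := hloc v hvmem w hwmem
      have habs : |v - w| = w - v := by rw [abs_sub_comm, abs_of_pos (by linarith)]
      simp only [hS, mem_setOf_eq] at hvS ⊢
      calc dist (c s) (c w) ≤ dist (c s) (c v) + dist (c v) (c w) := dist_triangle _ _ _
        _ ≤ curveLength c * (v - s) + (w - v) * curveLength c := by
            rw [hd, habs]; linarith
        _ = curveLength c * (w - s) := by ring
  exact hsub ⟨hsu, hu.2⟩

theorem localGeodesic_boundedVariation {c : ℝ → X} (h : IsLocalGeodesic c) :
    eVariationOn c (Icc (0:ℝ) 1) ≠ ⊤ := by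
  have hL0 : 0 ≤ curveLength c := ENNReal.toReal_nonneg
  have hlip : LipschitzOnWith (Real.toNNReal (curveLength c)) c (Icc 0 1) := by
    rw [lipschitzOnWith_iff_dist_le_mul]
    intro s hs u hu
    rw [Real.coe_toNNReal _ hL0, Real.dist_eq]
    rcases le_total s u with hle | hle
    · rw [abs_of_nonpos (by linarith)]
      have := localGeodesic_dist_le h hs hu hle
      linarith
    · rw [abs_of_nonneg (by linarith), dist_comm]
      have := localGeodesic_dist_le h hu hs hle
      linarith
  have hb := hlip.locallyBoundedVariationOn 0 1
    (left_mem_Icc.2 zero_le_one) (right_mem_Icc.2 zero_le_one)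
  rwa [inter_self] at hb

theorem lengthMetric_nonneg (u v : X) : 0 ≤ lengthMetric u v := ENNReal.toReal_nonneg

theorem lengthMetric_self (x : X) : lengthMetric x x = 0 := by
  have h : (⨅ (γ : ℝ → X) (_ : ContinuousOn γ (Icc (0:ℝ) 1)) (_ : γ 0 = x) (_ : γ 1 = x),
      eVariationOn γ (Icc (0:ℝ) 1)) = 0 := by
    apply le_antisymm _ (zero_le)
    refine iInf_le_of_le (fun _ => x) (iInf_le_of_le continuousOn_const
      (iInf_le_of_le rfl (iInf_le_of_le rfl ?_)))
    rw [eVariationOn.constant_on]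
    intro a ha b hb
    obtain ⟨_, _, rfl⟩ := ha
    obtain ⟨_, _, rfl⟩ := hb
    rfl
  unfold lengthMetric
  rw [h, ENNReal.toReal_zero]

theorem dist_le_lengthMetric' {u v : X} (γ : ℝ → X)
    (hγc : ContinuousOn γ (Icc 0 1)) (h0 : γ 0 = u) (h1 : γ 1 = v)
    (hfin : eVariationOn γ (Icc (0:ℝ) 1) ≠ ⊤) :
    dist u v ≤ lengthMetric u v := by
  set J := ⨅ (γ' : ℝ → X) (_ : ContinuousOn γ' (Icc (0:ℝ) 1)) (_ : γ' 0 = u) (_ : γ' 1 = v),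
    eVariationOn γ' (Icc (0:ℝ) 1) with hJ
  have hIle : J ≤ eVariationOn γ (Icc (0:ℝ) 1) :=
    iInf_le_of_le γ (iInf_le_of_le hγc (iInf_le_of_le h0 (iInf_le_of_le h1 le_rfl)))
  have hIne : J ≠ ⊤ := by
    intro hc
    exact hfin (top_le_iff.1 (hc ▸ hIle))
  have hed : edist u v ≤ J := by
    refine le_iInf fun γ' => le_iInf fun hc => le_iInf fun h0' => le_iInf fun h1' => ?_
    rw [← h0', ← h1']
    exact eVariationOn.edist_le γ' (left_mem_Icc.2 zero_le_one) (right_mem_Icc.2 zero_le_one)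
  calc dist u v = (edist u v).toReal := by rw [dist_edist]
    _ ≤ J.toReal := ENNReal.toReal_mono hIne hed
    _ = lengthMetric u v := rfl

end CHHelpers
section CHHelpers2

variable {X : Type*} [MetricSpace X] {L : LocalGeodesicBicombing X} {σb : X → X → ℝ → X}

theorem IsConsistentConvexBicombing.dist_le (h : IsConsistentConvexBicombing L σb)
    (u v : X) : dist u v ≤ lengthMetric u v :=
  dist_le_lengthMetric' (σb u v) (localGeodesic_continuousOn (h.localGeodesic u v))
    (h.source u v) (h.target u v) (localGeodesic_boundedVariation (h.localGeodesic u v))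

theorem IsConsistentConvexBicombing.bound (h : IsConsistentConvexBicombing L σb)
    (x z z' : X) {t : ℝ} (ht : t ∈ Icc (0:ℝ) 1) :
    dist (σb x z t) (σb x z' t) ≤ lengthMetric z z' := by
  have hconv := h.convex x z x z'
  have hineq := hconv.2 (left_mem_Icc.2 zero_le_one) (right_mem_Icc.2 zero_le_one)
    (show (0:ℝ) ≤ 1 - t by linarith [ht.2]) ht.1 (by ring)
  simp only [smul_eq_mul, mul_zero, mul_one, zero_add] at hineq
  have hln := lengthMetric_nonneg z z'
  calc dist (σb x z t) (σb x z' t) ≤ lengthMetric (σb x z t) (σb x z' t) := h.dist_le _ _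
    _ ≤ (1 - t) * lengthMetric (σb x z 0) (σb x z' 0)
        + t * lengthMetric (σb x z 1) (σb x z' 1) := hineq
    _ = t * lengthMetric z z' := by
        rw [h.source, h.source, h.target, h.target, lengthMetric_self]; ring
    _ ≤ lengthMetric z z' := by nlinarith [ht.1, ht.2]

theorem IsConsistentConvexBicombing.self_eq (h : IsConsistentConvexBicombing L σb)
    (x : X) {t : ℝ} (ht : t ∈ Icc (0:ℝ) 1) : σb x x t = x := by
  have hg := h.geodesic x x t ht 0 (left_mem_Icc.2 zero_le_one)
  rw [lengthMetric_self, mul_zero] at hg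
  have hd : dist (σb x x t) (σb x x 0) ≤ 0 := le_trans (h.dist_le _ _) (le_of_eq hg)
  have := dist_eq_zero.1 (le_antisymm hd dist_nonneg)
  rwa [h.source] at this

end CHHelpers2
/-- **Cartan–Hadamard theorem for convex bicombings (uniqueness).**
In a complete, simply-connected metric space with a convex local geodesic bicombing `σ`,
any two convex geodesic bicombings (with respect to the induced length metric) which are
consistent with `σ` agree on `[0,1]`. -/
theorem unique_consistent_convex_bicombing
    {X : Type*} [MetricSpace X] [CompleteSpace X] [SimplyConnectedSpace X]
    (L : LocalGeodesicBicombing X) (hL : L.IsConvex)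
    (σ' σ'' : X → X → ℝ → X)
    (h' : IsConsistentConvexBicombing L σ') (h'' : IsConsistentConvexBicombing L σ'') :
    ∀ x y : X, ∀ t ∈ Icc (0:ℝ) 1, σ' x y t = σ'' x y t := by
  intro x y
  set p : ℝ → X := σ' x y with hp
  set C : ℝ := lengthMetric x y with hC
  have hC0 : 0 ≤ C := lengthMetric_nonneg x y
  set A : Set ℝ := {s | s ∈ Icc (0:ℝ) 1 ∧
    ∀ t ∈ Icc (0:ℝ) 1, σ' x (p s) t = σ'' x (p s) t} with hA
  -- Lipschitz-type continuity in the parameter s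
  have hlm : ∀ s ∈ Icc (0:ℝ) 1, ∀ s' ∈ Icc (0:ℝ) 1,
      lengthMetric (p s) (p s') = |s - s'| * C :=
    fun s hs s' hs' => h'.geodesic x y s hs s' hs'
  have hlip1 : ∀ t ∈ Icc (0:ℝ) 1, ∀ s ∈ Icc (0:ℝ) 1, ∀ s' ∈ Icc (0:ℝ) 1,
      dist (σ' x (p s) t) (σ' x (p s') t) ≤ C * |s - s'| := by
    intro t ht s hs s' hs'
    calc dist (σ' x (p s) t) (σ' x (p s') t) ≤ lengthMetric (p s) (p s') :=
          h'.bound x (p s) (p s') ht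
      _ = C * |s - s'| := by rw [hlm s hs s' hs']; ring
  have hlip2 : ∀ t ∈ Icc (0:ℝ) 1, ∀ s ∈ Icc (0:ℝ) 1, ∀ s' ∈ Icc (0:ℝ) 1,
      dist (σ'' x (p s) t) (σ'' x (p s') t) ≤ C * |s - s'| := by
    intro t ht s hs s' hs'
    calc dist (σ'' x (p s) t) (σ'' x (p s') t) ≤ lengthMetric (p s) (p s') :=
          h''.bound x (p s) (p s') ht
      _ = C * |s - s'| := by rw [hlm s hs s' hs']; ring
  -- A is closed
  have hAclosed : IsClosed A := by
    have hrepr : A = ⋂ (t : Icc (0:ℝ) 1),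
        (Icc (0:ℝ) 1 ∩ (fun s => dist (σ' x (p s) t.1) (σ'' x (p s) t.1)) ⁻¹' {0}) := by
      ext s
      simp only [hA, mem_setOf_eq, mem_iInter, mem_inter_iff, mem_preimage,
        mem_singleton_iff]
      constructor
      · rintro ⟨hs, hall⟩ t
        exact ⟨hs, by rw [hall t.1 t.2]; simp⟩
      · intro hall
        have hs : s ∈ Icc (0:ℝ) 1 := (hall ⟨0, left_mem_Icc.2 zero_le_one⟩).1
        exact ⟨hs, fun t ht => dist_eq_zero.1 ((hall ⟨t, ht⟩).2)⟩
    rw [hrepr]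
    apply isClosed_iInter
    intro t
    apply ContinuousOn.preimage_isClosed_of_isClosed _ isClosed_Icc isClosed_singleton
    have hcont1 : ContinuousOn (fun s => σ' x (p s) t.1) (Icc 0 1) := by
      apply LipschitzOnWith.continuousOn (K := Real.toNNReal C)
      rw [lipschitzOnWith_iff_dist_le_mul]
      intro s hs s' hs'
      rw [Real.coe_toNNReal _ hC0, Real.dist_eq]
      exact hlip1 t.1 t.2 s hs s' hs'
    have hcont2 : ContinuousOn (fun s => σ'' x (p s) t.1) (Icc 0 1) := by
      apply LipschitzOnWith.continuousOn (K := Real.toNNReal C)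
      rw [lipschitzOnWith_iff_dist_le_mul]
      intro s hs s' hs'
      rw [Real.coe_toNNReal _ hC0, Real.dist_eq]
      exact hlip2 t.1 t.2 s hs s' hs'
    exact hcont1.dist' hcont2
  -- 0 ∈ A
  have h0A : (0:ℝ) ∈ A := by
    refine ⟨left_mem_Icc.2 zero_le_one, fun t ht => ?_⟩
    have hp0 : p 0 = x := h'.source x y
    rw [hp0, h'.self_eq x ht, h''.self_eq x ht]
  -- the progressive step
  have hprog : ∀ s0 ∈ A ∩ Ico (0:ℝ) 1, ∀ Y ∈ Ioi s0, (A ∩ Ioc s0 Y).Nonempty := by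
    rintro s0 ⟨⟨hs0Icc, hs0eq⟩, hs0I⟩ Y hY
    set z0 := p s0 with hz0
    set q : ℝ → X := σ' x z0 with hq
    have hqcont : ContinuousOn q (Icc 0 1) :=
      localGeodesic_continuousOn (h'.localGeodesic x z0)
    -- choose radii of continuity
    have hchoice : ∀ t : Icc (0:ℝ) 1, ∃ δ > 0, ∀ u ∈ Icc (0:ℝ) 1, |u - t.1| < δ →
        dist (q u) (q t.1) < L.r (q t.1) / 2 := by
      intro t
      have hc := hqcont t.1 t.2
      rw [Metric.continuousWithinAt_iff] at hc
      obtain ⟨δ, hδ, hd⟩ := hc (L.r (q t.1) / 2) (by linarith [L.r_pos (q t.1)])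
      exact ⟨δ, hδ, fun u hu hud => hd hu (by rwa [Real.dist_eq])⟩
    choose δf hδf hqδ using hchoice
    -- compactness: finite subcover
    have hcover : Icc (0:ℝ) 1 ⊆ ⋃ t : Icc (0:ℝ) 1, Ioo (t.1 - δf t / 2) (t.1 + δf t / 2) := by
      intro u hu
      refine mem_iUnion.2 ⟨⟨u, hu⟩, ?_⟩
      constructor <;> simp <;> linarith [hδf ⟨u, hu⟩]
    obtain ⟨T, hT⟩ := isCompact_Icc.elim_finite_subcover _ (fun t => isOpen_Ioo) hcover
    have hTne : T.Nonempty := by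
      have h0 := hT (left_mem_Icc.2 zero_le_one)
      simp only [mem_iUnion, Finset.mem_coe, exists_prop] at h0
      obtain ⟨i, hiT, _⟩ := h0
      exact ⟨i, hiT⟩
    set δmin := T.inf' hTne (fun i => δf i / 2) with hδmin
    have hδminpos : 0 < δmin := by
      rw [hδmin, Finset.lt_inf'_iff]
      exact fun i _ => by linarith [hδf i]
    set ρ := T.inf' hTne (fun i => L.r (q i.1) / 4) with hρ
    have hρpos : 0 < ρ := by
      rw [hρ, Finset.lt_inf'_iff]
      exact fun i _ => by linarith [L.r_pos (q i.1)]
    -- choose s1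
    set s1 := min (min (s0 + ρ / (C + 1)) Y) 1 with hs1def
    have hs1gt : s0 < s1 := by
      apply lt_min (lt_min _ hY) hs0I.2
      have : 0 < ρ / (C + 1) := by positivity
      linarith
    have hs1le1 : s1 ≤ 1 := min_le_right _ _
    have hs1Icc : s1 ∈ Icc (0:ℝ) 1 := ⟨le_trans hs0Icc.1 hs1gt.le, hs1le1⟩
    have hs1close : (s1 - s0) * C ≤ ρ := by
      have h1 : s1 - s0 ≤ ρ / (C + 1) := by
        have : s1 ≤ s0 + ρ / (C + 1) := le_trans (min_le_left _ _) (min_le_left _ _)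
        linarith
      calc (s1 - s0) * C ≤ (ρ / (C + 1)) * C := mul_le_mul_of_nonneg_right h1 hC0
        _ ≤ ρ := by
            rw [div_mul_eq_mul_div, div_le_iff₀ (by linarith : (0:ℝ) < C + 1)]
            nlinarith
    set z1 := p s1 with hz1
    set c1 : ℝ → X := σ' x z1 with hc1
    set c2 : ℝ → X := σ'' x z1 with hc2
    -- both curves are uniformly ρ-close to q
    have hL1 : lengthMetric z1 z0 ≤ ρ := by
      rw [hz1, hz0, hlm s1 hs1Icc s0 hs0Icc, abs_of_pos (by linarith : 0 < s1 - s0)]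
      exact hs1close
    have hclose1 : ∀ t ∈ Icc (0:ℝ) 1, dist (c1 t) (q t) ≤ ρ := fun t ht =>
      le_trans (h'.bound x z1 z0 ht) hL1
    have hq2 : ∀ t ∈ Icc (0:ℝ) 1, q t = σ'' x z0 t := fun t ht => hs0eq t ht
    have hclose2 : ∀ t ∈ Icc (0:ℝ) 1, dist (c2 t) (q t) ≤ ρ := fun t ht => by
      rw [hq2 t ht]
      exact le_trans (h''.bound x z1 z0 ht) hL1
    set f : ℝ → ℝ := fun t => dist (c1 t) (c2 t) with hf
    have hfcont : ContinuousOn f (Icc 0 1) :=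
      (localGeodesic_continuousOn (h'.localGeodesic x z1)).dist'
        (localGeodesic_continuousOn (h''.localGeodesic x z1))
    have hf0 : f 0 = 0 := by
      have e1 : c1 0 = x := h'.source x z1
      have e2 : c2 0 = x := h''.source x z1
      show dist (c1 0) (c2 0) = 0
      rw [e1, e2, dist_self]
    have hf1 : f 1 = 0 := by
      have e1 : c1 1 = z1 := h'.target x z1
      have e2 : c2 1 = z1 := h''.target x z1
      show dist (c1 1) (c2 1) = 0
      rw [e1, e2, dist_self]
    -- local convexity of f
    have hloc : ∀ t0 ∈ Icc (0:ℝ) 1,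
        ConvexOn ℝ (Icc (max (t0 - δmin) 0) (min (t0 + δmin) 1)) f := by
      intro t0 ht0
      obtain ⟨i, hiT, hi⟩ : ∃ i ∈ T, t0 ∈ Ioo (i.1 - δf i / 2) (i.1 + δf i / 2) := by
        have hm := hT ht0
        simpa only [mem_iUnion, Finset.mem_coe, exists_prop] using hm
      set a := max (t0 - δmin) 0 with ha
      set b := min (t0 + δmin) 1 with hb
      have h0a : 0 ≤ a := le_max_right _ _
      have hb1 : b ≤ 1 := min_le_right _ _
      have hat0 : a ≤ t0 := max_le (by linarith) ht0.1
      have ht0b : t0 ≤ b := le_min (by linarith) ht0.2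
      have hab : a < b := by
        rcases lt_or_ge t0 1 with h1 | h1
        · exact lt_of_le_of_lt hat0 (lt_min (by linarith) h1)
        · have ht01 : t0 = 1 := le_antisymm ht0.2 h1
          have ha' : a < t0 := max_lt (by linarith) (by rw [ht01]; norm_num)
          linarith
      have hsubIcc : Icc a b ⊆ Icc (0:ℝ) 1 := Icc_subset_Icc h0a hb1
      -- membership of endpoints in the ball around q i
      have hmem : ∀ u ∈ Icc a b, c1 u ∈ ball (q i.1) (L.r (q i.1)) ∧
          c2 u ∈ ball (q i.1) (L.r (q i.1)) := by
        intro u hu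
        have huIcc := hsubIcc hu
        have hui : |u - i.1| < δf i := by
          have hd1 : |u - t0| ≤ δmin := by
            rw [abs_le]
            constructor
            · have h2 := le_trans (le_max_left (t0 - δmin) 0) hu.1
              linarith
            · have h2 := le_trans hu.2 (min_le_left (t0 + δmin) 1)
              linarith
          have hd2 : |t0 - i.1| < δf i / 2 := by
            rw [abs_lt]; exact ⟨by linarith [hi.1], by linarith [hi.2]⟩
          have hd3 : δmin ≤ δf i / 2 := by
            rw [hδmin]; exact Finset.inf'_le _ hiT
          calc |u - i.1| ≤ |u - t0| + |t0 - i.1| := abs_sub_le _ _ _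
            _ < δf i := by linarith
        have hq_near : dist (q u) (q i.1) < L.r (q i.1) / 2 := hqδ i u huIcc hui
        have hρi : ρ ≤ L.r (q i.1) / 4 := by rw [hρ]; exact Finset.inf'_le _ hiT
        have hrpos := L.r_pos (q i.1)
        constructor
        · rw [mem_ball]
          calc dist (c1 u) (q i.1) ≤ dist (c1 u) (q u) + dist (q u) (q i.1) :=
                dist_triangle _ _ _
            _ < L.r (q i.1) := by linarith [hclose1 u huIcc]
        · rw [mem_ball]
          calc dist (c2 u) (q i.1) ≤ dist (c2 u) (q u) + dist (q u) (q i.1) :=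
                dist_triangle _ _ _
            _ < L.r (q i.1) := by linarith [hclose2 u huIcc]
      have hmema := hmem a (left_mem_Icc.2 hab.le)
      have hmemb := hmem b (right_mem_Icc.2 hab.le)
      have hdom : L.InDom (c1 a) (c1 b) := ⟨q i.1, hmema.1, hmemb.1⟩
      have hdom2 : L.InDom (c2 a) (c2 b) := ⟨q i.1, hmema.2, hmemb.2⟩
      have hc1cons := h'.consistentWith x z1 a b h0a hab.le hb1 hdom
      have hc2cons := h''.consistentWith x z1 a b h0a hab.le hb1 hdom2
      have hG := hL (q i.1) (c1 a) hmema.1 (c1 b) hmemb.1 (c2 a) hmema.2 (c2 b) hmemb.2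
      have hba : (0:ℝ) < b - a := by linarith
      have hkey : ∀ w ∈ Icc a b, f w =
          dist (L.σ (c1 a) (c1 b) ((w - a) / (b - a))) (L.σ (c2 a) (c2 b) ((w - a) / (b - a))) := by
        intro w hw
        have htw : (w - a) / (b - a) ∈ Icc (0:ℝ) 1 :=
          ⟨div_nonneg (by linarith [hw.1]) hba.le,
            (div_le_one hba).2 (by linarith [hw.2])⟩
        have hw' : (1 - (w - a) / (b - a)) * a + ((w - a) / (b - a)) * b = w := by
          field_simp
          ring
        have e1 := hc1cons ((w - a) / (b - a)) htw
        have e2 := hc2cons ((w - a) / (b - a)) htw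
        rw [hw'] at e1 e2
        rw [← hc1] at e1
        rw [← hc2] at e2
        show dist (c1 w) (c2 w) = _
        rw [e1, e2]
      constructor
      · exact convex_Icc a b
      · intro u hu v hv α β hα hβ hαβ
        have hmemw : α • u + β • v ∈ Icc a b := (convex_Icc a b) hu hv hα hβ hαβ
        rw [hkey _ hmemw, hkey _ hu, hkey _ hv]
        have htu : (u - a) / (b - a) ∈ Icc (0:ℝ) 1 :=
          ⟨div_nonneg (by linarith [hu.1]) hba.le, (div_le_one hba).2 (by linarith [hu.2])⟩
        have htv : (v - a) / (b - a) ∈ Icc (0:ℝ) 1 :=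
          ⟨div_nonneg (by linarith [hv.1]) hba.le, (div_le_one hba).2 (by linarith [hv.2])⟩
        have harith : (α • u + β • v - a) / (b - a)
            = α • ((u - a) / (b - a)) + β • ((v - a) / (b - a)) := by
          simp only [smul_eq_mul]
          rw [show α * u + β * v - a = α * (u - a) + β * (v - a) from by
            linear_combination a * hαβ, add_div, mul_div_assoc, mul_div_assoc]
        rw [harith]
        exact hG.2 htu htv hα hβ hαβ
    -- maximum principle: f vanishes on [0,1]
    have hfzero : ∀ t ∈ Icc (0:ℝ) 1, f t = 0 := by
      obtain ⟨tm, htm, hmax⟩ := isCompact_Icc.exists_isMaxOn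
        ⟨0, left_mem_Icc.2 zero_le_one⟩ hfcont
      have hMle : f tm ≤ 0 := by
        by_contra hMpos
        push_neg at hMpos
        set M := f tm with hM
        set S : Set ℝ := {t | t ∈ Icc (0:ℝ) 1 ∧ f t = M} with hSdef
        have hSclosed : IsClosed S := by
          have : S = Icc (0:ℝ) 1 ∩ f ⁻¹' {M} := by
            ext w; simp [hSdef]
          rw [this]
          exact hfcont.preimage_isClosed_of_isClosed isClosed_Icc isClosed_singleton
        have hSne : S.Nonempty := ⟨tm, htm, rfl⟩
        have hSbdd : BddBelow S := ⟨0, fun w hw => hw.1.1⟩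
        set ts := sInf S with hts
        have htsS : ts ∈ S := hSclosed.csInf_mem hSne hSbdd
        have hts0 : 0 < ts := by
          rcases eq_or_lt_of_le htsS.1.1 with h1 | h1
          · exfalso
            have := htsS.2
            rw [← h1, hf0] at this
            linarith
          · exact h1
        rcases eq_or_lt_of_le htsS.1.2 with ht1 | ht1
        · have := htsS.2
          rw [ht1, hf1] at this
          linarith
        · have hconv := hloc ts htsS.1
          set a := max (ts - δmin) 0 with ha
          set b := min (ts + δmin) 1 with hb
          have hat : a < ts := max_lt (by linarith) hts0
          have htb : ts < b := lt_min (by linarith) ht1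
          have hba : (0:ℝ) < b - a := by linarith
          set lam := (ts - a) / (b - a) with hlam
          have hlam0 : 0 < lam := div_pos (by linarith) hba
          have hlam1 : lam < 1 := (div_lt_one hba).2 (by linarith)
          have hts_eq : (1 - lam) • a + lam • b = ts := by
            simp only [smul_eq_mul, hlam]
            field_simp
            ring
          have hineq := hconv.2 (left_mem_Icc.2 (by linarith : a ≤ b))
            (right_mem_Icc.2 (by linarith : a ≤ b))
            (show (0:ℝ) ≤ 1 - lam by linarith) hlam0.le (by ring)
          rw [hts_eq] at hineq
          simp only [smul_eq_mul] at hineq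
          have haIcc : a ∈ Icc (0:ℝ) 1 := ⟨le_max_right _ _, by linarith [htsS.1.2]⟩
          have hbIcc : b ∈ Icc (0:ℝ) 1 := ⟨by linarith [htsS.1.1], min_le_right _ _⟩
          have hfa_le : f a ≤ M := hmax haIcc
          have hfaM : f a < M := by
            rcases eq_or_lt_of_le hfa_le with h1 | h1
            · exfalso
              have haS : a ∈ S := ⟨haIcc, h1⟩
              have := csInf_le hSbdd haS
              rw [← hts] at this
              linarith
            · exact h1
          have hfbM : f b ≤ M := hmax hbIcc
          have : f ts < M := by
            apply lt_of_le_of_lt hineq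
            nlinarith
          rw [htsS.2] at this
          linarith
      intro t ht
      have h1 : f t ≤ f tm := hmax ht
      have h2 : 0 ≤ f t := dist_nonneg
      linarith
    exact ⟨s1, ⟨hs1Icc, fun t ht => dist_eq_zero.1 (hfzero t ht)⟩, hs1gt,
      le_trans (min_le_left _ _) (min_le_right _ _)⟩

  -- conclude
  have hsub : Icc (0:ℝ) 1 ⊆ A := by
    apply IsClosed.Icc_subset_of_forall_exists_gt
      (by rw [inter_eq_left.2 (fun s hs => hs.1)]; exact hAclosed) h0A hprog
  have h1A := hsub (right_mem_Icc.2 zero_le_one)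
  intro t ht
  have heq := h1A.2 t ht
  rwa [show p 1 = y from h'.target x y] at heq
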